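/- Let 0 ≤ θ ≤ 1 and let ‖·‖₀, ‖·‖₁, ‖·‖_θ be norms on ℝ^N with dual norms ‖·‖₀*, ‖·‖₁*, ‖·‖_θ*. Suppose ‖x‖_θ* ≤ (‖x‖₁*)^θ (‖x‖₀*)^{1-θ} for all x ∈ ℝ^N. Then the Kolmogorov n-width of the unit ball B_θ of ‖·‖_θ in the space (ℝ^N, ‖·‖₁) satisfies d_n(B_θ, X₁) ≤ (d_n(B₀, X₁))^{1-θ}, where B₀ is the unit ball of ‖·‖₀. -/

import Mathlib

open scoped ENNReal NNReal BigOperators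

/-- The Kolmogorov `n`-width `d_n(M, X)` of `M` in the space with norm `nrm`:
the infimum over subspaces `L` of dimension at most `n` of
`sup_{x ∈ M} inf_{y ∈ L} ‖x - y‖`. -/
noncomputable def kolWidth {V : Type*} [AddCommGroup V] [Module ℝ V] (n : ℕ)
    (M : Set V) (nrm : V → ℝ) : ℝ≥0∞ :=
  ⨅ L : {L : Submodule ℝ V // Module.finrank ℝ (↥L) ≤ n},
    ⨆ x ∈ M, ⨅ y ∈ (L.1 : Set V), ENNReal.ofReal (nrm (x - y))

/-- The dual norm of `nrm` on `ℝ^N` w.r.t. the standard inner product. -/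
noncomputable def dualNorm {N : ℕ} (nrm : (Fin N → ℝ) → ℝ) (x : Fin N → ℝ) : ℝ :=
  ⨆ y : {y : Fin N → ℝ // nrm y ≤ 1}, ∑ i, x i * (y : Fin N → ℝ) i

/-- Gluskin's interpolation theorem for Kolmogorov widths: if `0 ≤ θ ≤ 1` and the
dual norms satisfy `‖x‖_θ* ≤ (‖x‖₁*)^θ (‖x‖₀*)^{1−θ}`, then
`d_n(B_θ, X₁) ≤ d_n(B₀, X₁)^{1−θ}`. -/

lemma semi_upper {N : ℕ} (f : Seminorm ℝ (Fin N → ℝ)) :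
    ∃ C : ℝ, 0 ≤ C ∧ ∀ x, f x ≤ C * ‖x‖ := by
  refine ⟨∑ i, f ((Pi.single i 1 : Fin N → ℝ)), Finset.sum_nonneg fun i _ => apply_nonneg f _, fun x => ?_⟩
  have hx : x = ∑ i, x i • (Pi.single i 1 : Fin N → ℝ) := by
    ext j; simp [Pi.single_apply, Finset.sum_apply]
  calc f x = f (∑ i, x i • (Pi.single i 1 : Fin N → ℝ)) := by rw [← hx]
    _ ≤ ∑ i, f (x i • (Pi.single i 1 : Fin N → ℝ)) :=
        Finset.le_sum_of_subadditive f (map_zero f).le (map_add_le_add f) _ _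
    _ = ∑ i, |x i| * f ((Pi.single i 1 : Fin N → ℝ)) := by
        simp [map_smul_eq_mul, Real.norm_eq_abs]
    _ ≤ ∑ i, ‖x‖ * f ((Pi.single i 1 : Fin N → ℝ)) := by
        refine Finset.sum_le_sum fun i _ => ?_
        exact mul_le_mul_of_nonneg_right (by simpa using norm_le_pi_norm x i) (apply_nonneg f _)
    _ = (∑ i, f ((Pi.single i 1 : Fin N → ℝ))) * ‖x‖ := by rw [Finset.sum_mul]; exact Finset.sum_congr rfl fun i _ => mul_comm _ _

lemma semi_lower {N : ℕ} (f : Seminorm ℝ (Fin N → ℝ)) (hf : ∀ x, f x = 0 → x = 0) :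
    ∃ c : ℝ, 0 < c ∧ ∀ x, c * ‖x‖ ≤ f x := by
  obtain ⟨C, hC0, hC⟩ := semi_upper f
  have hcont : Continuous f := by
    have : LipschitzWith C.toNNReal f := by
      refine LipschitzWith.of_dist_le_mul fun x y => ?_
      rw [Real.dist_eq, dist_eq_norm]
      calc |f x - f y| ≤ f (x - y) := abs_sub_map_le_sub f x y
        _ ≤ C * ‖x - y‖ := hC _
        _ = C.toNNReal * ‖x - y‖ := by rw [Real.coe_toNNReal _ hC0]
    exact this.continuous
  by_cases hs : (Metric.sphere (0 : Fin N → ℝ) 1).Nonempty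
  · obtain ⟨z, hz, hmin⟩ := (isCompact_sphere (0 : Fin N → ℝ) 1).exists_isMinOn hs
      hcont.continuousOn
    have hz1 : ‖z‖ = 1 := by simpa using hz
    have hzpos : 0 < f z := by
      rcases (apply_nonneg f z).lt_or_eq with h | h
      · exact h
      · exact absurd (hf z h.symm) (by intro h0; rw [h0] at hz1; simp at hz1)
    refine ⟨f z, hzpos, fun x => ?_⟩
    rcases eq_or_ne x 0 with rfl | hx
    · simp
    · have hnx : 0 < ‖x‖ := norm_pos_iff.2 hx
      have hmem : ‖x‖⁻¹ • x ∈ Metric.sphere (0 : Fin N → ℝ) 1 := by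
        simp [norm_smul, abs_of_pos (inv_pos.2 hnx), inv_mul_cancel₀ hnx.ne']
      have h2 : f z ≤ f (‖x‖⁻¹ • x) := hmin hmem
      have hfx : f (‖x‖⁻¹ • x) = ‖x‖⁻¹ * f x := by
        rw [map_smul_eq_mul]; simp [abs_of_pos (inv_pos.2 hnx)]
      rw [hfx] at h2
      calc f z * ‖x‖ ≤ (‖x‖⁻¹ * f x) * ‖x‖ := by
            exact mul_le_mul_of_nonneg_right h2 hnx.le
        _ = f x := by field_simp
  · refine ⟨1, one_pos, fun x => ?_⟩
    rcases eq_or_ne x 0 with rfl | hx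
    · simp
    · exact absurd ⟨‖x‖⁻¹ • x, by
        simp [norm_smul, abs_of_pos (inv_pos.2 (norm_pos_iff.2 hx)),
          inv_mul_cancel₀ (norm_pos_iff.2 hx).ne']⟩ hs


lemma exists_functional {N : ℕ} (f1 : Seminorm ℝ (Fin N → ℝ)) (L : Submodule ℝ (Fin N → ℝ))
    (x₀ : Fin N → ℝ) :
    ∃ g : (Fin N → ℝ) →ₗ[ℝ] ℝ, (∀ l ∈ L, g l = 0) ∧ (∀ v, g v ≤ f1 v) ∧
      (⨅ y : L, f1 (x₀ - y)) ≤ g x₀ := by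
  set d : ℝ := ⨅ y : L, f1 (x₀ - y) with hd
  have hbdd : BddBelow (Set.range fun y : L => f1 (x₀ - y)) :=
    ⟨0, by rintro r ⟨y, rfl⟩; exact apply_nonneg f1 _⟩
  have hd0 : 0 ≤ d := Real.iInf_nonneg fun y => apply_nonneg f1 _
  have hdle : ∀ l ∈ L, d ≤ f1 (x₀ - l) := fun l hl => ciInf_le hbdd (⟨l, hl⟩ : L)
  by_cases hx : x₀ ∈ L
  · refine ⟨0, by simp, fun v => by simpa using apply_nonneg f1 v, ?_⟩
    simp only [LinearMap.zero_apply]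
    have : d ≤ f1 (x₀ - x₀) := hdle x₀ hx
    simpa using this
  · set p0 : (Fin N → ℝ) →ₗ.[ℝ] ℝ := ⟨L, 0⟩ with hp0
    have hx' : x₀ ∉ p0.domain := hx
    set p := p0.supSpanSingleton x₀ d hx' with hp
    have hpapp : ∀ (l : Fin N → ℝ) (hl : l ∈ L) (t : ℝ),
        p ⟨l + t • x₀, LinearPMap.domain_supSpanSingleton p0 x₀ d hx' ▸
          Submodule.mem_sup.2 ⟨l, hl, t • x₀,
            Submodule.mem_span_singleton.2 ⟨t, rfl⟩, rfl⟩⟩ = t * d := by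
      intro l hl t
      have := p0.supSpanSingleton_apply_mk x₀ d hx' l hl t
      rw [this]
      simp [hp0]
      rfl
    have hdom : ∀ v : p.domain, p v ≤ f1 v := by
      rintro ⟨v, hv⟩
      rw [hp, LinearPMap.domain_supSpanSingleton] at hv
      obtain ⟨l, hl, s, hs, rfl⟩ := Submodule.mem_sup.1 hv
      obtain ⟨t, rfl⟩ := Submodule.mem_span_singleton.1 hs
      have happ := hpapp l hl t
      rw [show (⟨l + t • x₀, hv⟩ : p.domain) = ⟨l + t • x₀, _⟩ from rfl, happ]
      show t * d ≤ f1 (l + t • x₀)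
      rcases lt_trichotomy t 0 with ht | ht | ht
      · exact le_trans (mul_nonpos_of_nonpos_of_nonneg ht.le hd0) (apply_nonneg f1 _)
      · subst ht; simpa using apply_nonneg f1 _
      · have h1 : l + t • x₀ = t • (x₀ - (-(t⁻¹ • l))) := by
          rw [sub_neg_eq_add, smul_add, smul_smul, mul_inv_cancel₀ ht.ne', one_smul]
          ring_nf
        rw [h1, map_smul_eq_mul, Real.norm_eq_abs, abs_of_pos ht]
        exact mul_le_mul_of_nonneg_left
          (hdle _ (Submodule.neg_mem L (Submodule.smul_mem L _ hl))) ht.le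
    obtain ⟨g, hg_eq, hg_le⟩ := exists_extension_of_le_sublinear p f1
      (fun c hc x => by rw [map_smul_eq_mul, Real.norm_eq_abs, abs_of_pos hc])
      (fun x y => map_add_le_add f1 x y) hdom
    refine ⟨g, ?_, hg_le, ?_⟩
    · intro l hl
      have hmem : l ∈ p.domain := by
        rw [hp, LinearPMap.domain_supSpanSingleton]
        exact Submodule.mem_sup_left hl
      have hmem' : l + (0:ℝ) • x₀ ∈ p.domain := by simpa using hmem
      have h0 : (⟨l, hmem⟩ : p.domain) = ⟨l + (0:ℝ) • x₀, hmem'⟩ := by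
        ext; simp
      have := hg_eq ⟨l, hmem⟩
      rw [this, h0, hpapp l hl 0, zero_mul]
    · have hmem : x₀ ∈ p.domain := by
        rw [hp, LinearPMap.domain_supSpanSingleton]
        exact Submodule.mem_sup_right (Submodule.mem_span_singleton_self x₀)
      have hmem' : 0 + (1:ℝ) • x₀ ∈ p.domain := by simpa using hmem
      have h0 : (⟨x₀, hmem⟩ : p.domain) = ⟨0 + (1:ℝ) • x₀, hmem'⟩ := by
        ext; simp
      have := hg_eq ⟨x₀, hmem⟩
      rw [h0, hpapp 0 (Submodule.zero_mem L) 1, one_mul] at this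
      have h2 : g x₀ = d := by simpa using this
      exact h2.ge


lemma dual_bdd {N : ℕ} (f : Seminorm ℝ (Fin N → ℝ)) (hf : ∀ x, f x = 0 → x = 0)
    (z : Fin N → ℝ) :
    BddAbove (Set.range fun y : {y : Fin N → ℝ // f y ≤ 1} => ∑ i, z i * (y : Fin N → ℝ) i) := by
  obtain ⟨c, hc, hcl⟩ := semi_lower f hf
  refine ⟨(∑ i, |z i|) * (1 / c), ?_⟩
  rintro r ⟨y, rfl⟩
  have hy : ‖(y : Fin N → ℝ)‖ ≤ 1 / c := by
    rw [le_div_iff₀ hc]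
    have h1 := hcl y
    have h2 := y.2
    linarith
  calc ∑ i, z i * (y : Fin N → ℝ) i ≤ ∑ i, |z i * (y : Fin N → ℝ) i| :=
        Finset.sum_le_sum fun i _ => le_abs_self _
    _ = ∑ i, |z i| * |(y : Fin N → ℝ) i| := by simp [abs_mul]
    _ ≤ ∑ i, |z i| * (1 / c) := by
        refine Finset.sum_le_sum fun i _ => ?_
        exact mul_le_mul_of_nonneg_left
          (le_trans (by simpa using norm_le_pi_norm (y : Fin N → ℝ) i) hy) (abs_nonneg _)
    _ = (∑ i, |z i|) * (1 / c) := by rw [Finset.sum_mul]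

instance {N : ℕ} (f : Seminorm ℝ (Fin N → ℝ)) : Nonempty {y : Fin N → ℝ // f y ≤ 1} :=
  ⟨0, by simp⟩

lemma dist_bound {N : ℕ} (θ : ℝ) (hθ0 : 0 ≤ θ) (hθ1 : θ ≤ 1)
    (f0 f1 fθ : Seminorm ℝ (Fin N → ℝ))
    (h0 : ∀ x, f0 x = 0 → x = 0) (h1 : ∀ x, f1 x = 0 → x = 0)
    (hθd : ∀ x, fθ x = 0 → x = 0)
    (hdual : ∀ x, dualNorm (⇑fθ) x ≤ (dualNorm (⇑f1) x) ^ θ * (dualNorm (⇑f0) x) ^ (1 - θ))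
    (L : Submodule ℝ (Fin N → ℝ)) (D : ℝ) (hD : 0 ≤ D)
    (hDb : ∀ x', f0 x' ≤ 1 → (⨅ y : L, f1 (x' - y)) ≤ D)
    (x : Fin N → ℝ) (hx : fθ x ≤ 1) :
    (⨅ y : L, f1 (x - y)) ≤ D ^ (1 - θ) := by
  obtain ⟨g, hgL, hgle, hgx⟩ := exists_functional f1 L x
  set zv : Fin N → ℝ := fun i => g (Pi.single i 1) with hzv
  have hsum : ∀ w : Fin N → ℝ, ∑ i, zv i * w i = g w := by
    intro w
    have hrep : ∀ i, (fun j : Fin N => if i = j then (1:ℝ) else 0) = Pi.single i (1:ℝ) := by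
      intro i; funext j; simp [Pi.single_apply, eq_comm]
    rw [LinearMap.pi_apply_eq_sum_univ g w]
    refine Finset.sum_congr rfl fun i _ => ?_
    rw [hrep i, smul_eq_mul, mul_comm]
  have hval : ∀ (f : Seminorm ℝ (Fin N → ℝ)) (y : {y : Fin N → ℝ // f y ≤ 1}),
      ∑ i, zv i * (y : Fin N → ℝ) i = g y := fun f y => hsum y
  have h_dn1_le1 : dualNorm (⇑f1) zv ≤ 1 := by
    refine ciSup_le fun y => ?_
    rw [hval f1 y]
    exact (hgle y).trans y.2
  have h_nonneg : ∀ (f : Seminorm ℝ (Fin N → ℝ)) (hf : ∀ x, f x = 0 → x = 0),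
      0 ≤ dualNorm (⇑f) zv := by
    intro f hf
    have := le_ciSup (dual_bdd f hf zv) (⟨0, by simp⟩ : {y : Fin N → ℝ // f y ≤ 1})
    simpa [dualNorm] using this
  have h_dn0_le : dualNorm (⇑f0) zv ≤ D := by
    refine ciSup_le fun y => ?_
    rw [hval f0 y]
    refine le_trans (le_ciInf fun y' => ?_) (hDb y y.2)
    have : g (y : Fin N → ℝ) = g ((y : Fin N → ℝ) - y') := by
      rw [map_sub, hgL y' y'.2, sub_zero]
    rw [this]
    exact hgle _
  have key : (⨅ y : L, f1 (x - y)) ≤ dualNorm (⇑fθ) zv := by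
    refine hgx.trans ?_
    have := le_ciSup (dual_bdd fθ hθd zv) (⟨x, hx⟩ : {y : Fin N → ℝ // fθ y ≤ 1})
    rw [hval fθ ⟨x, hx⟩] at this
    exact this
  refine key.trans ((hdual zv).trans ?_)
  calc (dualNorm (⇑f1) zv) ^ θ * (dualNorm (⇑f0) zv) ^ (1 - θ)
      ≤ 1 * D ^ (1 - θ) := by
        refine mul_le_mul (Real.rpow_le_one (h_nonneg f1 h1) h_dn1_le1 hθ0)
          (Real.rpow_le_rpow (h_nonneg f0 h0) h_dn0_le (by linarith))
          (Real.rpow_nonneg (h_nonneg f0 h0) _) one_pos.le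
    _ = D ^ (1 - θ) := one_mul _


/-- Gluskin -/
theorem stmt_0 {N : ℕ} (n : ℕ) (θ : ℝ) (hθ0 : 0 ≤ θ) (hθ1 : θ ≤ 1)
    (f0 f1 fθ : Seminorm ℝ (Fin N → ℝ))
    (h0 : ∀ x, f0 x = 0 → x = 0) (h1 : ∀ x, f1 x = 0 → x = 0)
    (hθd : ∀ x, fθ x = 0 → x = 0)
    (hdual : ∀ x, dualNorm (⇑fθ) x ≤ (dualNorm (⇑f1) x) ^ θ * (dualNorm (⇑f0) x) ^ (1 - θ)) :
    kolWidth n {x | fθ x ≤ 1} (⇑f1) ≤ (kolWidth n {x | f0 x ≤ 1} (⇑f1)) ^ (1 - θ) := by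
  have hc : (0:ℝ) ≤ 1 - θ := by linarith
  -- the per-L suprema
  set S0 : Submodule ℝ (Fin N → ℝ) → ℝ≥0∞ := fun L =>
    ⨆ x ∈ {x | f0 x ≤ 1}, ⨅ y ∈ (L : Set (Fin N → ℝ)), ENNReal.ofReal (f1 (x - y)) with hS0
  set Sθ : Submodule ℝ (Fin N → ℝ) → ℝ≥0∞ := fun L =>
    ⨆ x ∈ {x | fθ x ≤ 1}, ⨅ y ∈ (L : Set (Fin N → ℝ)), ENNReal.ofReal (f1 (x - y)) with hSθ
  have key : ∀ L : Submodule ℝ (Fin N → ℝ), Sθ L ≤ (S0 L) ^ (1 - θ) := by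
    intro L
    obtain ⟨C1, hC1, hC1l⟩ := semi_upper f1
    obtain ⟨c0, hc0, hc0l⟩ := semi_lower f0 h0
    have hbdd : ∀ x : Fin N → ℝ, BddBelow (Set.range fun y : L => f1 (x - y)) := fun x =>
      ⟨0, by rintro r ⟨y, rfl⟩; exact apply_nonneg f1 _⟩
    have hfin : S0 L ≠ ⊤ := by
      refine ne_top_of_le_ne_top (b := ENNReal.ofReal (C1 * (1 / c0))) ENNReal.ofReal_ne_top ?_
      refine iSup₂_le fun x hx => ?_
      refine le_trans (iInf₂_le 0 (Submodule.zero_mem L)) ?_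
      refine ENNReal.ofReal_le_ofReal ?_
      rw [sub_zero]
      have h1' : ‖x‖ ≤ 1 / c0 := by
        rw [le_div_iff₀ hc0]
        have := hc0l x
        have hx2 : f0 x ≤ 1 := hx
        linarith
      calc f1 x ≤ C1 * ‖x‖ := hC1l x
        _ ≤ C1 * (1 / c0) := mul_le_mul_of_nonneg_left h1' hC1
    set D : ℝ := (S0 L).toReal with hDdef
    have hD0 : 0 ≤ D := ENNReal.toReal_nonneg
    have hDb : ∀ x', f0 x' ≤ 1 → (⨅ y : L, f1 (x' - y)) ≤ D := by
      intro x' hx'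
      have hinf0 : 0 ≤ ⨅ y : L, f1 (x' - y) := Real.iInf_nonneg fun y => apply_nonneg f1 _
      have h1' : ENNReal.ofReal (⨅ y : L, f1 (x' - y)) ≤ S0 L := by
        refine le_trans (le_iInf₂ fun y hy => ?_) (le_iSup₂ (f := fun x _ =>
          ⨅ y ∈ (L : Set (Fin N → ℝ)), ENNReal.ofReal (f1 (x - y))) x' hx')
        exact ENNReal.ofReal_le_ofReal (ciInf_le (hbdd x') (⟨y, hy⟩ : L))
      have := ENNReal.toReal_mono hfin h1'
      rwa [ENNReal.toReal_ofReal hinf0] at this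
    refine iSup₂_le fun x hx => ?_
    have hdist := dist_bound θ hθ0 hθ1 f0 f1 fθ h0 h1 hθd hdual L D hD0 hDb x hx
    have hstep : (⨅ y ∈ (L : Set (Fin N → ℝ)), ENNReal.ofReal (f1 (x - y)))
        ≤ ENNReal.ofReal (⨅ y : L, f1 (x - y)) := by
      refine ENNReal.le_of_forall_pos_le_add fun ε hε _ => ?_
      have hlt : (⨅ y : L, f1 (x - y)) < (⨅ y : L, f1 (x - y)) + (ε : ℝ) := by
        have : (0:ℝ) < ε := hε
        linarith
      obtain ⟨y, hy⟩ := exists_lt_of_ciInf_lt hlt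
      refine le_trans (iInf₂_le (y : Fin N → ℝ) y.2) ?_
      refine le_trans (ENNReal.ofReal_le_ofReal hy.le) ?_
      rw [ENNReal.ofReal_add (Real.iInf_nonneg fun y => apply_nonneg f1 _) (by positivity),
        ENNReal.ofReal_coe_nnreal]
    refine hstep.trans ?_
    calc ENNReal.ofReal (⨅ y : L, f1 (x - y)) ≤ ENNReal.ofReal (D ^ (1 - θ)) :=
          ENNReal.ofReal_le_ofReal hdist
      _ = (ENNReal.ofReal D) ^ (1 - θ) := (ENNReal.ofReal_rpow_of_nonneg hD0 hc).symm
      _ = (S0 L) ^ (1 - θ) := by rw [hDdef, ENNReal.ofReal_toReal hfin]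
  -- assemble over L
  rw [kolWidth, kolWidth]
  have step1 : (⨅ L : {L : Submodule ℝ (Fin N → ℝ) // Module.finrank ℝ (↥L) ≤ n}, Sθ L.1)
      ≤ ⨅ L : {L : Submodule ℝ (Fin N → ℝ) // Module.finrank ℝ (↥L) ≤ n}, (S0 L.1) ^ (1 - θ) :=
    iInf_mono fun L => key L.1
  refine le_trans step1 ?_
  rcases eq_or_lt_of_le hc with hc' | hc'
  · simp only [← hc', ENNReal.rpow_zero]
    exact iInf_le_of_le ⟨⊥, by simp⟩ le_rfl
  · set A := ⨅ L : {L : Submodule ℝ (Fin N → ℝ) // Module.finrank ℝ (↥L) ≤ n}, (S0 L.1) ^ (1 - θ)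
    have hA : A ^ (1 / (1 - θ)) ≤ ⨅ L : {L : Submodule ℝ (Fin N → ℝ) //
        Module.finrank ℝ (↥L) ≤ n}, S0 L.1 := by
      refine le_iInf fun L => ?_
      calc A ^ (1 / (1 - θ)) ≤ ((S0 L.1) ^ (1 - θ)) ^ (1 / (1 - θ)) :=
            ENNReal.rpow_le_rpow (iInf_le _ L) (by positivity)
        _ = S0 L.1 := by
            rw [← ENNReal.rpow_mul, mul_one_div_cancel hc'.ne', ENNReal.rpow_one]
    calc A = (A ^ (1 / (1 - θ))) ^ (1 - θ) := by
          rw [← ENNReal.rpow_mul, one_div_mul_cancel hc'.ne', ENNReal.rpow_one]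
      _ ≤ (⨅ L : {L : Submodule ℝ (Fin N → ℝ) // Module.finrank ℝ (↥L) ≤ n}, S0 L.1) ^ (1 - θ) :=
          ENNReal.rpow_le_rpow hA hc
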